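/- arXiv:2602.10925 — 4 statements merged into one kernel-verified Lean document; each statement's English description precedes it below -/
import Mathlib

section
/- Let N ≥ K ≥ 2 with K even, let σ, ω ≥ 0, and let ξ_1, …, ξ_{K−1} and u_0, …, u_{K−1} be real random variables such that the full family is independent, each ξ_j has the Gaussian law with mean 0 and variance σ²/N, and each u_j has the Gaussian law with mean 0 and variance ω². Define Y_j = Σ_{l=1}^{j} ξ_l + u_j for j = 0, …, K−1 (with Y_0 = u_0). Then the pre-averaged return r* = (1/K)(Σ_{j=K/2}^{K−1} Y_j − Σ_{j=0}^{K/2−1} Y_j) has the Gaussian law with mean 0 and variance σ²·K·ψ_K/N + ω²/K, where ψ_K = (1 + 2K^{−2})/12. -/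
open MeasureTheory ProbabilityTheory Real NNReal ENNReal

section Aux

lemma gaussianPDFReal_mul_eq (m1 m2 : ℝ) (v1 v2 : ℝ≥0) (h1 : v1 ≠ 0) (h2 : v2 ≠ 0) (y x : ℝ) :
    gaussianPDFReal m1 v1 x * gaussianPDFReal m2 v2 (y - x) =
      gaussianPDFReal (m1 + m2) (v1 + v2) y *
        gaussianPDFReal ((v2 * m1 + v1 * (y - m2)) / (v1 + v2)) (v1 * v2 / (v1 + v2)) x := by
  have ha : (0:ℝ) < v1 := NNReal.coe_pos.2 (pos_iff_ne_zero.mpr h1)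
  have hb : (0:ℝ) < v2 := NNReal.coe_pos.2 (pos_iff_ne_zero.mpr h2)
  have hab : (0:ℝ) < (v1:ℝ) + v2 := by linarith
  simp only [gaussianPDFReal, NNReal.coe_add, NNReal.coe_mul, NNReal.coe_div]
  rw [mul_mul_mul_comm, mul_mul_mul_comm ((√(2 * π * ((v1:ℝ) + v2)))⁻¹)]
  congr 1
  · rw [← mul_inv, ← mul_inv, ← Real.sqrt_mul (by positivity), ← Real.sqrt_mul (by positivity)]
    congr 1
    field_simp
  · rw [← Real.exp_add, ← Real.exp_add]
    congr 1
    field_simp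
    ring

lemma integral_gaussianPDFReal_conv (m1 m2 : ℝ) (v1 v2 : ℝ≥0) (h1 : v1 ≠ 0) (h2 : v2 ≠ 0)
    (y : ℝ) :
    ∫ x, gaussianPDFReal m1 v1 x * gaussianPDFReal m2 v2 (y - x) =
      gaussianPDFReal (m1 + m2) (v1 + v2) y := by
  have h3 : v1 * v2 / (v1 + v2) ≠ 0 := by
    rw [div_ne_zero_iff]
    exact ⟨mul_ne_zero h1 h2, by simp [h1, h2]⟩
  simp_rw [gaussianPDFReal_mul_eq m1 m2 v1 v2 h1 h2 y]
  rw [MeasureTheory.integral_const_mul, integral_gaussianPDFReal_eq_one _ h3, mul_one]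

lemma lintegral_gaussianPDF_conv (m1 m2 : ℝ) (v1 v2 : ℝ≥0) (h1 : v1 ≠ 0) (h2 : v2 ≠ 0)
    (y : ℝ) :
    ∫⁻ x, gaussianPDF m1 v1 x * gaussianPDF m2 v2 (y - x) =
      gaussianPDF (m1 + m2) (v1 + v2) y := by
  have h3 : v1 * v2 / (v1 + v2) ≠ 0 := by
    rw [div_ne_zero_iff]
    exact ⟨mul_ne_zero h1 h2, by simp [h1, h2]⟩
  simp only [gaussianPDF]
  rw [← integral_gaussianPDFReal_conv m1 m2 v1 v2 h1 h2 y,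
    ofReal_integral_eq_lintegral_ofReal]
  · simp_rw [ENNReal.ofReal_mul (gaussianPDFReal_nonneg m1 v1 _)]
  · simp_rw [gaussianPDFReal_mul_eq m1 m2 v1 v2 h1 h2 y]
    exact (integrable_gaussianPDFReal _ _).const_mul _
  · exact Filter.Eventually.of_forall fun x =>
      mul_nonneg (gaussianPDFReal_nonneg _ _ _) (gaussianPDFReal_nonneg _ _ _)

lemma conv_def {μ ν : Measure ℝ} :
    μ.conv ν = Measure.map (fun p : ℝ × ℝ => p.1 + p.2) (μ.prod ν) := rfl

lemma gaussianReal_conv (m1 m2 : ℝ) (v1 v2 : ℝ≥0) :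
    Measure.conv (gaussianReal m1 v1) (gaussianReal m2 v2) = gaussianReal (m1 + m2) (v1 + v2) := by
  by_cases h1 : v1 = 0
  · subst h1
    rw [gaussianReal_zero_var, zero_add, Measure.conv, Measure.dirac_prod,
      Measure.map_map measurable_add measurable_prodMk_left]
    have : ((fun p : ℝ × ℝ => p.1 + p.2) ∘ Prod.mk m1) = fun y => m1 + y := rfl
    rw [this, gaussianReal_map_const_add, add_comm m2 m1]
  by_cases h2 : v2 = 0
  · subst h2
    rw [gaussianReal_zero_var, add_zero, Measure.conv, Measure.prod_dirac,
      Measure.map_map measurable_add measurable_prodMk_right]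
    have : ((fun p : ℝ × ℝ => p.1 + p.2) ∘ (fun x : ℝ => (x, m2))) = fun x : ℝ => x + m2 := rfl
    rw [this, gaussianReal_map_add_const]
  -- main case
  set f := gaussianPDF m1 v1 with hf
  set g := gaussianPDF m2 v2 with hg
  have hfm : Measurable f := measurable_gaussianPDF _ _
  have hgm : Measurable g := measurable_gaussianPDF _ _
  ext s hs
  have hind : Measurable (s.indicator (1 : ℝ → ℝ≥0∞)) := measurable_one.indicator hs
  have hindle : ∀ y, s.indicator (1 : ℝ → ℝ≥0∞) y ≠ ⊤ := by
    intro y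
    by_cases hy : y ∈ s <;> simp [Set.indicator_apply, hy]
  rw [conv_def, Measure.map_apply measurable_add hs,
    gaussianReal_of_var_ne_zero m1 h1, gaussianReal_of_var_ne_zero m2 h2,
    gaussianReal_apply _ (show v1 + v2 ≠ 0 by simp [h1]) s]
  have hS : MeasurableSet ((fun p : ℝ × ℝ => p.1 + p.2) ⁻¹' s) := measurable_add hs
  rw [Measure.prod_apply hS]
  have step1 : ∀ x : ℝ,
      (volume.withDensity g) (Prod.mk x ⁻¹' ((fun p : ℝ × ℝ => p.1 + p.2) ⁻¹' s)) =
        ∫⁻ y, g (y - x) * s.indicator 1 y := by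
    intro x
    have hmx : MeasurableSet ((fun y : ℝ => x + y) ⁻¹' s) := (measurable_const_add x) hs
    rw [show (Prod.mk x ⁻¹' ((fun p : ℝ × ℝ => p.1 + p.2) ⁻¹' s)) = (fun y => x + y) ⁻¹' s
        from rfl, withDensity_apply _ hmx, ← lintegral_indicator hmx _]
    have e1 : ∀ y : ℝ, ((fun y : ℝ => x + y) ⁻¹' s).indicator g y
        = g y * s.indicator 1 (x + y) := by
      intro y
      by_cases hy : x + y ∈ s <;>
        simp [Set.indicator_apply, hy, Set.mem_preimage]
    simp_rw [e1]
    have := lintegral_add_right_eq_self (μ := volume)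
      (fun y => g (y - x) * s.indicator 1 y) x
    rw [← this]
    congr 1
    ext y
    rw [add_sub_cancel_right, add_comm y x]
  simp_rw [← hf, ← hg, step1]
  rw [lintegral_withDensity_eq_lintegral_mul _ hfm]
  swap
  · exact Measurable.lintegral_prod_right <|
      ((hgm.comp (measurable_snd.sub measurable_fst))).mul (hind.comp measurable_snd)
  have step2 : ∀ x : ℝ, (f * fun x => ∫⁻ y, g (y - x) * s.indicator 1 y) x
      = ∫⁻ y, f x * (g (y - x) * s.indicator 1 y) := by
    intro x
    exact (lintegral_const_mul _ ((hgm.comp (measurable_id.sub measurable_const)).mul hind)).symm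
  simp_rw [step2]
  rw [lintegral_lintegral_swap]
  swap
  · exact ((hfm.comp measurable_fst).mul
      ((hgm.comp (measurable_snd.sub measurable_fst)).mul (hind.comp measurable_snd))).aemeasurable
  have step3 : ∀ y : ℝ, ∫⁻ x, f x * (g (y - x) * s.indicator 1 y)
      = gaussianPDF (m1 + m2) (v1 + v2) y * s.indicator 1 y := by
    intro y
    calc ∫⁻ x, f x * (g (y - x) * s.indicator 1 y)
        = ∫⁻ x, (f x * g (y - x)) * s.indicator 1 y := by simp_rw [mul_assoc]
      _ = (∫⁻ x, f x * g (y - x)) * s.indicator 1 y :=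
          lintegral_mul_const' _ _ (hindle y)
      _ = gaussianPDF (m1 + m2) (v1 + v2) y * s.indicator 1 y := by
          rw [lintegral_gaussianPDF_conv m1 m2 v1 v2 h1 h2 y]
  simp_rw [step3]
  have step4 : ∀ y : ℝ, gaussianPDF (m1 + m2) (v1 + v2) y * s.indicator 1 y
      = s.indicator (gaussianPDF (m1 + m2) (v1 + v2)) y := by
    intro y
    by_cases hy : y ∈ s <;> simp [Set.indicator_apply, hy]
  simp_rw [step4]
  rw [lintegral_indicator hs]

lemma indepFun_map_add_eq_conv {Ω : Type*} [MeasurableSpace Ω] {P : Measure Ω}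
    [IsProbabilityMeasure P] {X Y : Ω → ℝ} (h : IndepFun X Y P)
    (hX : Measurable X) (hY : Measurable Y) :
    Measure.map (fun ω => X ω + Y ω) P = Measure.conv (Measure.map X P) (Measure.map Y P) := by
  rw [conv_def, ← (indepFun_iff_map_prod_eq_prod_map_map hX.aemeasurable hY.aemeasurable).1 h,
    Measure.map_map measurable_add (hX.prodMk hY)]
  rfl

lemma iIndepFun_gaussian_sum {Ω ι : Type*} [MeasurableSpace Ω] {P : Measure Ω}
    [IsProbabilityMeasure P] {X : ι → Ω → ℝ} (hmeas : ∀ i, Measurable (X i))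
    (hindep : iIndepFun X P) (μ : ι → ℝ) (v : ι → ℝ≥0)
    (hlaw : ∀ i, Measure.map (X i) P = gaussianReal (μ i) (v i)) (s : Finset ι) :
    Measure.map (fun ω => ∑ i ∈ s, X i ω) P
      = gaussianReal (∑ i ∈ s, μ i) (∑ i ∈ s, v i) := by
  classical
  induction s using Finset.induction_on with
  | empty =>
      simp only [Finset.sum_empty]
      rw [show (fun _ : Ω => (0:ℝ)) = fun _ => (0:ℝ) from rfl, Measure.map_const,
        gaussianReal_zero_var]
      simp
  | @insert i s hi ih =>
      have hfn : (∑ j ∈ s, X j) = fun ω => ∑ j ∈ s, X j ω :=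
        funext fun ω => Finset.sum_apply _ _ _
      have h1 : IndepFun (X i) (fun ω => ∑ j ∈ s, X j ω) P := by
        rw [← hfn]
        exact (hindep.indepFun_finsetSum_of_notMem hmeas hi).symm
      have hsm : Measurable (fun ω => ∑ j ∈ s, X j ω) :=
        Finset.measurable_sum s (fun j _ => hmeas j)
      have key : Measure.map (fun ω => X i ω + ∑ j ∈ s, X j ω) P
          = Measure.conv (Measure.map (X i) P) (Measure.map (fun ω => ∑ j ∈ s, X j ω) P) :=
        indepFun_map_add_eq_conv h1 (hmeas i) hsm
      have e1 : (fun ω => ∑ j ∈ insert i s, X j ω) = fun ω => X i ω + ∑ j ∈ s, X j ω := by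
        funext ω
        rw [Finset.sum_insert hi]
      rw [e1, key, hlaw i, ih, gaussianReal_conv, Finset.sum_insert hi, Finset.sum_insert hi]

lemma gaussian_weighted_sum {Ω ι : Type*} [Fintype ι] [MeasurableSpace Ω] {P : Measure Ω}
    [IsProbabilityMeasure P] {Z : ι → Ω → ℝ} (hmeas : ∀ i, Measurable (Z i))
    (hindep : iIndepFun Z P) (c : ι → ℝ) (v : ι → ℝ≥0)
    (hlaw : ∀ i, Measure.map (Z i) P = gaussianReal 0 (v i)) :
    Measure.map (fun ω => ∑ i, c i * Z i ω) P
      = gaussianReal 0 (∑ i, (⟨(c i)^2, sq_nonneg _⟩ * v i : ℝ≥0)) := by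
  have hlaw' : ∀ i, Measure.map (fun ω => c i * Z i ω) P
      = gaussianReal 0 (⟨(c i)^2, sq_nonneg _⟩ * v i : ℝ≥0) := by
    intro i
    rw [show (fun ω => c i * Z i ω) = (fun x => c i * x) ∘ Z i from rfl,
      ← Measure.map_map (measurable_const_mul (c i)) (hmeas i), hlaw i,
      gaussianReal_map_const_mul, mul_zero]
    rfl
  have := iIndepFun_gaussian_sum (X := fun i ω => c i * Z i ω)
    (fun i => (hmeas i).const_mul _)
    (hindep.comp (fun i x => c i * x) (fun i => measurable_const_mul (c i)))
    (fun _ => 0) (fun i => (⟨(c i)^2, sq_nonneg _⟩ * v i : ℝ≥0))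
    hlaw' Finset.univ
  simpa using this

lemma sum_triangle (f : ℕ → ℝ) : ∀ n : ℕ,
    ∑ j ∈ Finset.range n, ∑ l ∈ Finset.Icc 1 j, f l
      = ∑ l ∈ Finset.Icc 1 n, ((n - l : ℕ) : ℝ) * f l := by
  intro n
  induction n with
  | zero => simp
  | succ n ih =>
      rw [Finset.sum_range_succ, ih, Finset.sum_Icc_succ_top (by omega : 1 ≤ n + 1)]
      have h1 : ∀ l ∈ Finset.Icc 1 n, ((n + 1 - l : ℕ) : ℝ) * f l
          = ((n - l : ℕ) : ℝ) * f l + f l := by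
        intro l hl
        rw [Finset.mem_Icc] at hl
        have : n + 1 - l = (n - l) + 1 := by omega
        rw [this]
        push_cast
        ring
      rw [Finset.sum_congr rfl h1, Finset.sum_add_distrib]
      simp

lemma six_sum_sq (n : ℕ) : 6 * ∑ l ∈ Finset.Icc 1 n, l^2 = n*(n+1)*(2*n+1) := by
  induction n with
  | zero => simp
  | succ n ih =>
      rw [Finset.sum_Icc_succ_top (by omega : 1 ≤ n + 1), Nat.mul_add, ih]
      ring

lemma twelve_sum_min_sq (m : ℕ) :
    12 * ∑ l ∈ Finset.Icc 1 (2*m-1), (min l (2*m-l))^2 = 2*m*((2*m)^2+2) := by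
  rcases Nat.eq_zero_or_pos m with hm | hm
  · subst hm; simp
  have hsplit : Finset.Icc 1 (2*m-1) = Finset.Icc 1 m ∪ Finset.Icc (m+1) (2*m-1) := by
    ext l
    simp only [Finset.mem_union, Finset.mem_Icc]
    omega
  have hdisj : Disjoint (Finset.Icc 1 m) (Finset.Icc (m+1) (2*m-1)) := by
    rw [Finset.disjoint_left]
    intro a ha hb
    rw [Finset.mem_Icc] at ha hb
    omega
  rw [hsplit, Finset.sum_union hdisj]
  have e1 : ∑ l ∈ Finset.Icc 1 m, (min l (2*m-l))^2 = ∑ l ∈ Finset.Icc 1 m, l^2 := by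
    refine Finset.sum_congr rfl fun l hl => ?_
    rw [Finset.mem_Icc] at hl
    rw [min_eq_left (by omega)]
  have e2 : ∑ l ∈ Finset.Icc (m+1) (2*m-1), (min l (2*m-l))^2
      = ∑ l ∈ Finset.Icc 1 (m-1), l^2 := by
    rw [show ∑ l ∈ Finset.Icc (m+1) (2*m-1), (min l (2*m-l))^2
        = ∑ l ∈ Finset.Icc (m+1) (2*m-1), (2*m-l)^2 from Finset.sum_congr rfl fun l hl => by
      rw [Finset.mem_Icc] at hl
      rw [min_eq_right (by omega)]]
    refine Finset.sum_nbij' (fun l => 2*m - l) (fun t => 2*m - t) ?_ ?_ ?_ ?_ ?_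
    · intro a ha; simp only [Finset.mem_Icc] at *; omega
    · intro a ha; simp only [Finset.mem_Icc] at *; omega
    · intro a ha; simp only [Finset.mem_Icc] at ha; show 2*m - (2*m - a) = a; omega
    · intro a ha; simp only [Finset.mem_Icc] at ha; show 2*m - (2*m - a) = a; omega
    · intro a ha; rfl
  rw [e1, e2]
  obtain ⟨k, rfl⟩ : ∃ k, m = k + 1 := ⟨m - 1, by omega⟩
  have h1 := six_sum_sq (k+1)
  have h2 := six_sum_sq k
  rw [show k + 1 - 1 = k from rfl]
  calc 12 * (∑ l ∈ Finset.Icc 1 (k+1), l^2 + ∑ l ∈ Finset.Icc 1 k, l^2)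
      = 2 * (6 * ∑ l ∈ Finset.Icc 1 (k+1), l^2) + 2 * (6 * ∑ l ∈ Finset.Icc 1 k, l^2) := by
        ring
    _ = 2*(k+1)*((2*(k+1))^2+2) := by rw [h1, h2]; ring

end Aux

/-- Exact finite-sample law of a pre-averaged return: with independent Gaussian
efficient-price increments `ξ_1, …, ξ_{K−1} ~ N(0, σ²/N)` and Gaussian noise
`u_0, …, u_{K−1} ~ N(0, w²)` (the full family independent), prices
`Y_j = ∑_{l=1}^j ξ_l + u_j`, and `K` even, the pre-averaged return
`r* = (1/K)(∑_{j=K/2}^{K−1} Y_j − ∑_{j=0}^{K/2−1} Y_j)` is Gaussian with mean `0`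
and variance `σ² K ψ_K / N + w² / K`, where `ψ_K = (1 + 2 K⁻²)/12`. -/
theorem preaveraged_return_gaussian_law {Ω : Type*} [MeasurableSpace Ω] (P : Measure Ω)
    [IsProbabilityMeasure P] (N K : ℕ) (hKN : K ≤ N) (hK : 2 ≤ K) (hKe : Even K)
    (σ w : ℝ) (hσ : 0 ≤ σ) (hw : 0 ≤ w) (ξ u : ℕ → Ω → ℝ)
    (hξmeas : ∀ j, Measurable (ξ j)) (humeas : ∀ j, Measurable (u j))
    (hindep : iIndepFun (m := fun _ : Fin (K - 1) ⊕ Fin K => (inferInstance : MeasurableSpace ℝ))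
      (Sum.elim (fun i : Fin (K - 1) => ξ (i.1 + 1)) (fun j : Fin K => u j.1)) P)
    (hξlaw : ∀ j, 1 ≤ j → j ≤ K - 1 →
      Measure.map (ξ j) P = gaussianReal 0 (σ ^ 2 / N).toNNReal)
    (hulaw : ∀ j < K, Measure.map (u j) P = gaussianReal 0 (w ^ 2).toNNReal)
    (Y : ℕ → Ω → ℝ) (hY : ∀ j ω, Y j ω = (∑ l ∈ Finset.Icc 1 j, ξ l ω) + u j ω) :
    Measure.map
        (fun ω => (1 / (K : ℝ)) *
          ((∑ j ∈ Finset.Ico (K / 2) K, Y j ω) - ∑ j ∈ Finset.range (K / 2), Y j ω)) P =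
      gaussianReal 0
        (σ ^ 2 * K * ((1 + 2 / (K : ℝ) ^ 2) / 12) / N + w ^ 2 / K).toNNReal := by
  classical
  obtain ⟨m, hm⟩ := hKe
  have hm1 : 1 ≤ m := by omega
  have hK2 : K = 2 * m := by omega
  have hKd2 : K / 2 = m := by omega
  have hKR : (K : ℝ) ≠ 0 := Nat.cast_ne_zero.2 (by omega)
  have hNR : (N : ℝ) ≠ 0 := Nat.cast_ne_zero.2 (by omega)
  have hKm : (K : ℝ) = 2 * m := by rw [hK2]; push_cast; ring
  set Z : Fin (K - 1) ⊕ Fin K → Ω → ℝ :=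
    Sum.elim (fun i : Fin (K - 1) => ξ (i.1 + 1)) (fun j : Fin K => u j.1) with hZ
  set c : Fin (K - 1) ⊕ Fin K → ℝ :=
    Sum.elim (fun i : Fin (K - 1) => ((min (i.1 + 1) (K - (i.1 + 1)) : ℕ) : ℝ) / K)
      (fun j : Fin K => if m ≤ j.1 then 1 / (K : ℝ) else -(1 / (K : ℝ))) with hc
  set v : Fin (K - 1) ⊕ Fin K → ℝ≥0 :=
    Sum.elim (fun _ : Fin (K - 1) => (σ ^ 2 / N).toNNReal)
      (fun _ : Fin K => (w ^ 2).toNNReal) with hv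
  have hmeas : ∀ i, Measurable (Z i) := by rintro (i | j)
                                           · exact hξmeas _
                                           · exact humeas _
  have hlaw : ∀ i, Measure.map (Z i) P = gaussianReal 0 (v i) := by
    rintro (i | j)
    · exact hξlaw (i.1 + 1) (by omega) (by have := i.2; omega)
    · exact hulaw j.1 j.2
  have main := gaussian_weighted_sum hmeas hindep c v hlaw
  -- Step 1: the random variables agree
  have key : (fun ω => (1 / (K : ℝ)) *
      ((∑ j ∈ Finset.Ico (K / 2) K, Y j ω) - ∑ j ∈ Finset.range (K / 2), Y j ω))
      = fun ω => ∑ i, c i * Z i ω := by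
    funext ω
    rw [hKd2]
    simp only [hY]
    rw [Finset.sum_add_distrib, Finset.sum_add_distrib]
    rw [Fintype.sum_sum_type]
    -- u-part of RHS
    have hu : ∑ j : Fin K, c (Sum.inr j) * Z (Sum.inr j) ω
        = (1 / (K : ℝ)) * ((∑ j ∈ Finset.Ico m K, u j ω) - ∑ j ∈ Finset.range m, u j ω) := by
      have e0 : ∑ j : Fin K, c (Sum.inr j) * Z (Sum.inr j) ω
          = ∑ j ∈ Finset.range K,
              (if m ≤ j then 1 / (K : ℝ) else -(1 / (K : ℝ))) * u j ω := by
        simp only [hc, hZ, Sum.elim_inr]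
        exact Fin.sum_univ_eq_sum_range (fun j =>
          (if m ≤ j then 1 / (K : ℝ) else -(1 / (K : ℝ))) * u j ω) K
      rw [e0]
      have hsplit : Finset.range K = Finset.range m ∪ Finset.Ico m K := by
        ext a
        simp only [Finset.mem_range, Finset.mem_union, Finset.mem_Ico]
        omega
      have hdisj : Disjoint (Finset.range m) (Finset.Ico m K) := by
        rw [Finset.disjoint_left]
        intro a ha hb
        rw [Finset.mem_range] at ha
        rw [Finset.mem_Ico] at hb
        omega
      rw [hsplit, Finset.sum_union hdisj]
      have e1 : ∑ j ∈ Finset.range m,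
          (if m ≤ j then 1 / (K : ℝ) else -(1 / (K : ℝ))) * u j ω
          = ∑ j ∈ Finset.range m, -(1 / (K : ℝ)) * u j ω := by
        refine Finset.sum_congr rfl fun j hj => ?_
        rw [Finset.mem_range] at hj
        rw [if_neg (by omega)]
      have e2 : ∑ j ∈ Finset.Ico m K,
          (if m ≤ j then 1 / (K : ℝ) else -(1 / (K : ℝ))) * u j ω
          = ∑ j ∈ Finset.Ico m K, (1 / (K : ℝ)) * u j ω := by
        refine Finset.sum_congr rfl fun j hj => ?_
        rw [Finset.mem_Ico] at hj
        rw [if_pos (by omega)]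
      rw [e1, e2, ← Finset.mul_sum, ← Finset.mul_sum]
      ring
    -- ξ-part of RHS
    have hxi : ∑ i : Fin (K - 1), c (Sum.inl i) * Z (Sum.inl i) ω
        = (1 / (K : ℝ)) * ((∑ j ∈ Finset.Ico m K, ∑ l ∈ Finset.Icc 1 j, ξ l ω)
            - ∑ j ∈ Finset.range m, ∑ l ∈ Finset.Icc 1 j, ξ l ω) := by
      have e0 : ∑ i : Fin (K - 1), c (Sum.inl i) * Z (Sum.inl i) ω
          = ∑ l ∈ Finset.range (K - 1),
              ((min (l + 1) (K - (l + 1)) : ℕ) : ℝ) / K * ξ (l + 1) ω := by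
        simp only [hc, hZ, Sum.elim_inl]
        exact Fin.sum_univ_eq_sum_range (fun l =>
          ((min (l + 1) (K - (l + 1)) : ℕ) : ℝ) / K * ξ (l + 1) ω) (K - 1)
      have e1 : ∑ l ∈ Finset.Icc 1 (K - 1),
            ((min l (K - l) : ℕ) : ℝ) / K * ξ l ω
          = ∑ l ∈ Finset.range (K - 1),
              ((min (l + 1) (K - (l + 1)) : ℕ) : ℝ) / K * ξ (l + 1) ω := by
        rw [show Finset.Icc 1 (K - 1) = Finset.Ico 1 K from by
              ext a; simp only [Finset.mem_Icc, Finset.mem_Ico]; omega,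
          Finset.sum_Ico_eq_sum_range]
        refine Finset.sum_congr rfl fun l hl => ?_
        rw [show 1 + l = l + 1 from by omega]
      rw [e0, ← e1]
      -- now express LHS via sum_triangle
      have hIco : ∑ j ∈ Finset.Ico m K, ∑ l ∈ Finset.Icc 1 j, ξ l ω
          = (∑ j ∈ Finset.range K, ∑ l ∈ Finset.Icc 1 j, ξ l ω)
            - ∑ j ∈ Finset.range m, ∑ l ∈ Finset.Icc 1 j, ξ l ω := by
        rw [Finset.sum_Ico_eq_sub _ (by omega : m ≤ K)]
      rw [hIco, sum_triangle (fun l => ξ l ω) K, sum_triangle (fun l => ξ l ω) m]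
      have hsub1 : ∑ l ∈ Finset.Icc 1 K, ((K - l : ℕ) : ℝ) * ξ l ω
          = ∑ l ∈ Finset.Icc 1 (K - 1), ((K - l : ℕ) : ℝ) * ξ l ω := by
        symm
        refine Finset.sum_subset (fun x hx => ?_) (fun x hx hnx => ?_)
        · rw [Finset.mem_Icc] at *; omega
        · rw [Finset.mem_Icc] at hx
          rw [Finset.mem_Icc] at hnx
          have : x = K := by omega
          subst this
          rw [Nat.sub_self]
          simp
      have hsub2 : ∑ l ∈ Finset.Icc 1 m, ((m - l : ℕ) : ℝ) * ξ l ω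
          = ∑ l ∈ Finset.Icc 1 (K - 1), ((m - l : ℕ) : ℝ) * ξ l ω := by
        refine Finset.sum_subset (fun x hx => ?_) (fun x hx hnx => ?_)
        · rw [Finset.mem_Icc] at *; omega
        · rw [Finset.mem_Icc] at hx
          rw [Finset.mem_Icc] at hnx
          rw [Nat.sub_eq_zero_of_le (by omega)]
          simp
      rw [hsub1, hsub2, ← Finset.sum_sub_distrib, ← Finset.sum_sub_distrib, Finset.mul_sum]
      refine Finset.sum_congr rfl fun l hl => ?_
      rw [Finset.mem_Icc] at hl
      rcases le_or_gt l m with hcase | hcase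
      · rw [min_eq_left (show l ≤ K - l by omega),
          Nat.cast_sub (show l ≤ K by omega), Nat.cast_sub (show l ≤ m by omega)]
        rw [hKm]
        push_cast
        try field_simp
        try ring
      · rw [min_eq_right (show K - l ≤ l by omega),
          Nat.sub_eq_zero_of_le (show m ≤ l by omega),
          Nat.cast_sub (show l ≤ K by omega)]
        rw [hKm]
        push_cast
        try field_simp
        try ring
    rw [hu, hxi]
    ring
  rw [key, main]
  -- Step 2: the variances agree
  congr 1
  apply NNReal.coe_injective
  rw [NNReal.coe_sum]
  have hξv : ((σ ^ 2 / N).toNNReal : ℝ) = σ ^ 2 / N :=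
    Real.coe_toNNReal _ (by positivity)
  have huv : ((w ^ 2).toNNReal : ℝ) = w ^ 2 :=
    Real.coe_toNNReal _ (by positivity)
  have hrhs : ((σ ^ 2 * K * ((1 + 2 / (K : ℝ) ^ 2) / 12) / N + w ^ 2 / K).toNNReal : ℝ)
      = σ ^ 2 * K * ((1 + 2 / (K : ℝ) ^ 2) / 12) / N + w ^ 2 / K := by
    refine Real.coe_toNNReal _ ?_
    have h1 : (0:ℝ) < K := by positivity
    have h2 : (0:ℝ) ≤ 1 + 2 / (K : ℝ) ^ 2 := by positivity
    have h3 : (0:ℝ) < N := by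
      have : (0:ℕ) < N := by omega
      exact_mod_cast this
    positivity
  rw [hrhs]
  rw [Fintype.sum_sum_type]
  have hcoe : ∀ (a : ℝ) (b : ℝ≥0), ((( ⟨a^2, sq_nonneg a⟩ * b : ℝ≥0)) : ℝ) = a^2 * (b:ℝ) := by
    intro a b
    rfl
  simp only [hcoe]
  -- u part
  have hupart : ∑ j : Fin K, (c (Sum.inr j))^2 * ((v (Sum.inr j)) : ℝ) = w ^ 2 / K := by
    have e0 : ∀ j : Fin K, (c (Sum.inr j))^2 * ((v (Sum.inr j)) : ℝ)
        = 1 / (K:ℝ)^2 * w^2 := by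
      intro j
      simp only [hc, hv, Sum.elim_inr, huv]
      split_ifs <;> ring
    rw [Finset.sum_congr rfl fun j _ => e0 j, Finset.sum_const, Finset.card_univ,
      Fintype.card_fin, nsmul_eq_mul]
    field_simp
  -- ξ part
  have hxipart : ∑ i : Fin (K - 1), (c (Sum.inl i))^2 * ((v (Sum.inl i)) : ℝ)
      = σ ^ 2 * K * ((1 + 2 / (K : ℝ) ^ 2) / 12) / N := by
    have e0 : ∑ i : Fin (K - 1), (c (Sum.inl i))^2 * ((v (Sum.inl i)) : ℝ)
        = ∑ l ∈ Finset.range (K - 1),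
            (((min (l + 1) (K - (l + 1)) : ℕ) : ℝ) / K)^2 * (σ^2 / N) := by
      simp only [hc, hv, Sum.elim_inl, hξv]
      rw [Fin.sum_univ_eq_sum_range (fun l =>
        (((min (l + 1) (K - (l + 1)) : ℕ) : ℝ) / K)^2 * (σ^2 / N)) (K - 1)]
    have e1 : ∑ l ∈ Finset.Icc 1 (K - 1),
          (((min l (K - l) : ℕ) : ℝ) / K)^2 * (σ^2 / N)
        = ∑ l ∈ Finset.range (K - 1),
            (((min (l + 1) (K - (l + 1)) : ℕ) : ℝ) / K)^2 * (σ^2 / N) := by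
      rw [show Finset.Icc 1 (K - 1) = Finset.Ico 1 K from by
            ext a; simp only [Finset.mem_Icc, Finset.mem_Ico]; omega,
        Finset.sum_Ico_eq_sum_range]
      refine Finset.sum_congr rfl fun l hl => ?_
      rw [show 1 + l = l + 1 from by omega]
    rw [e0, ← e1]
    have e2 : ∑ l ∈ Finset.Icc 1 (K - 1), (((min l (K - l) : ℕ) : ℝ) / K)^2 * (σ^2 / N)
        = ((∑ l ∈ Finset.Icc 1 (K - 1), (min l (K - l))^2 : ℕ) : ℝ) * (σ^2 / ((K:ℝ)^2 * N)) := by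
      rw [Nat.cast_sum, Finset.sum_mul]
      refine Finset.sum_congr rfl fun l hl => ?_
      push_cast
      try field_simp
      try ring
    rw [e2]
    have hS : 12 * ∑ l ∈ Finset.Icc 1 (K - 1), (min l (K - l))^2 = K * (K^2 + 2) := by
      have := twelve_sum_min_sq m
      rw [show 2 * m - 1 = K - 1 from by omega] at this
      simp only [← hK2] at this
      convert this using 2 <;> omega
    have hSR : (12:ℝ) * ((∑ l ∈ Finset.Icc 1 (K - 1), (min l (K - l))^2 : ℕ) : ℝ)
        = (K:ℝ) * ((K:ℝ)^2 + 2) := by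
      exact_mod_cast congrArg (Nat.cast : ℕ → ℝ) hS
    have hSval : ((∑ l ∈ Finset.Icc 1 (K - 1), (min l (K - l))^2 : ℕ) : ℝ)
        = (K:ℝ) * ((K:ℝ)^2 + 2) / 12 := by linarith
    rw [hSval]
    field_simp
  rw [hupart, hxipart]
end

section
/- Let N ≥ 2 and let r_1, …, r_N be independent real random variables where r_i has the Gaussian law with mean 0 and variance v_i ≥ 0. Then E[ (π/2) Σ_{i=2}^{N} |r_{i−1}|·|r_i| ] ≤ Σ_{i=1}^{N} v_i − (v_1 + v_N)/2, with equality if and only if v_{i−1} = v_i for all i = 2, …, N. -/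
open MeasureTheory ProbabilityTheory Real Filter Set
open scoped NNReal ENNReal

private lemma bv_int_Ioi {b : ℝ} (hb : 0 < b) :
    ∫ x in Set.Ioi (0:ℝ), x * Real.exp (-b * x ^ 2) = (2 * b)⁻¹ := by
  have hderiv : ∀ x ∈ Set.Ici (0:ℝ),
      HasDerivAt (fun y : ℝ => -(2 * b)⁻¹ * Real.exp (-b * y ^ 2))
        (x * Real.exp (-b * x ^ 2)) x := by
    intro x _
    have h1 : HasDerivAt (fun y : ℝ => -b * y ^ 2) (-b * (2 * x)) x := by
      simpa using (hasDerivAt_pow 2 x).const_mul (-b)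
    have h2 := h1.exp.const_mul (-(2 * b)⁻¹)
    refine h2.congr_deriv (Eq.symm ?_)
    field_simp
  have hint : IntegrableOn (fun x : ℝ => x * Real.exp (-b * x ^ 2)) (Set.Ioi 0) :=
    (integrable_mul_exp_neg_mul_sq hb).integrableOn
  have h3 : Tendsto (fun y : ℝ => -b * y ^ 2) atTop atBot := by
    have := (tendsto_pow_atTop (two_ne_zero)).const_mul_atTop_of_neg
      (by linarith : -b < 0)
    simpa using this
  have htend : Tendsto (fun y : ℝ => -(2 * b)⁻¹ * Real.exp (-b * y ^ 2)) atTop (nhds 0) := by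
    have := (Real.tendsto_exp_atBot.comp h3).const_mul (-(2 * b)⁻¹)
    simpa using this
  have := integral_Ioi_of_hasDerivAt_of_tendsto' hderiv hint htend
  rw [this]
  simp

private lemma bv_gauss_abs (v : ℝ≥0) :
    ∫ x, |x| ∂(gaussianReal 0 v) = Real.sqrt (2 * v / π) := by
  by_cases hv : v = 0
  · subst hv
    simp [gaussianReal_zero_var]
  · have hvpos : (0:ℝ) < v := lt_of_le_of_ne v.coe_nonneg (by exact_mod_cast (Ne.symm hv))
    have hb : (0:ℝ) < (2 * (v:ℝ))⁻¹ := by positivity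
    rw [gaussianReal_of_var_ne_zero 0 hv]
    have hpdf : gaussianPDF 0 v = fun x => ((Real.toNNReal (gaussianPDFReal 0 v x) : ℝ≥0) : ℝ≥0∞) := by
      ext x
      rw [gaussianPDF]
      rfl
    rw [hpdf, integral_withDensity_eq_integral_smul
      ((measurable_gaussianPDFReal 0 v).real_toNNReal) (fun x => |x|)]
    have hfun : (fun x : ℝ => (Real.toNNReal (gaussianPDFReal 0 v x) : ℝ≥0) • |x|) =
        fun x => (√(2 * π * v))⁻¹ * (|x| * Real.exp (-(2 * (v:ℝ))⁻¹ * |x| ^ 2)) := by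
      ext x
      rw [NNReal.smul_def, smul_eq_mul,
        Real.coe_toNNReal _ (gaussianPDFReal_nonneg 0 v x), gaussianPDFReal]
      have harg : -(x - 0) ^ 2 / (2 * (v:ℝ)) = -(2 * (v:ℝ))⁻¹ * |x| ^ 2 := by
        rw [sq_abs, sub_zero]
        field_simp
      rw [harg]
      ring
    rw [hfun]
    rw [integral_comp_abs (f := fun x => (√(2 * π * v))⁻¹ * (x * Real.exp (-(2 * (v:ℝ))⁻¹ * x ^ 2)))]
    rw [integral_const_mul, bv_int_Ioi hb]
    have h2 : (2 * (2 * (v:ℝ))⁻¹)⁻¹ = (v:ℝ) := by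
      rw [mul_inv, inv_inv]
      field_simp
    rw [h2]
    have hsq : 2 * (v:ℝ) / π = (2 * (v:ℝ)) ^ 2 / (2 * π * v) := by
      field_simp
    rw [hsq, Real.sqrt_div (by positivity) _, Real.sqrt_sq (by positivity)]
    rw [eq_div_iff (by positivity : √(2 * π * (v:ℝ)) ≠ 0)]
    have hne : √(2 * π * (v:ℝ)) ≠ 0 := by positivity
    field_simp

private lemma bv_gauss_abs_int (v : ℝ≥0) :
    Integrable (fun x : ℝ => |x|) (gaussianReal 0 v) := by
  by_cases hv : v = 0
  · subst hv
    rw [gaussianReal_zero_var]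
    exact (integrable_const |(0:ℝ)|).congr (ae_eq_dirac (fun x : ℝ => |x|)).symm
  · have hvpos : (0:ℝ) < v := lt_of_le_of_ne v.coe_nonneg (by exact_mod_cast (Ne.symm hv))
    have hb : (0:ℝ) < (2 * (v:ℝ))⁻¹ := by positivity
    rw [gaussianReal_of_var_ne_zero 0 hv]
    have hpdf : gaussianPDF 0 v = fun x => ((Real.toNNReal (gaussianPDFReal 0 v x) : ℝ≥0) : ℝ≥0∞) := by
      ext x; rw [gaussianPDF]; rfl
    rw [hpdf, integrable_withDensity_iff_integrable_smul
      ((measurable_gaussianPDFReal 0 v).real_toNNReal)]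
    have hfun : (fun x : ℝ => (Real.toNNReal (gaussianPDFReal 0 v x) : ℝ≥0) • |x|) =
        fun x => (√(2 * π * v))⁻¹ * |x * Real.exp (-(2 * (v:ℝ))⁻¹ * x ^ 2)| := by
      ext x
      rw [NNReal.smul_def, smul_eq_mul,
        Real.coe_toNNReal _ (gaussianPDFReal_nonneg 0 v x), gaussianPDFReal,
        abs_mul, abs_of_pos (Real.exp_pos _)]
      have harg : -(x - 0) ^ 2 / (2 * (v:ℝ)) = -(2 * (v:ℝ))⁻¹ * x ^ 2 := by
        rw [sub_zero]
        field_simp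
      rw [harg]
      ring
    rw [hfun]
    exact ((integrable_mul_exp_neg_mul_sq hb).abs).const_mul _

private lemma bv_amgm {a b : ℝ} (ha : 0 ≤ a) (hb : 0 ≤ b) :
    Real.sqrt (a * b) ≤ (a + b) / 2 := by
  rw [Real.sqrt_mul ha]
  nlinarith [Real.sq_sqrt ha, Real.sq_sqrt hb, sq_nonneg (Real.sqrt a - Real.sqrt b)]

private lemma bv_amgm_eq {a b : ℝ} (ha : 0 ≤ a) (hb : 0 ≤ b) :
    Real.sqrt (a * b) = (a + b) / 2 ↔ a = b := by
  constructor
  · intro h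
    rw [Real.sqrt_mul ha] at h
    have h1 := Real.sq_sqrt ha
    have h2 := Real.sq_sqrt hb
    have h3 : (Real.sqrt a - Real.sqrt b) ^ 2 = 0 := by nlinarith
    have h4 : Real.sqrt a = Real.sqrt b := by
      have := pow_eq_zero_iff (n := 2) (by norm_num) |>.mp h3
      linarith
    nlinarith
  · rintro rfl
    rw [Real.sqrt_mul_self ha]
    ring

private lemma bv_sum_shift (f : ℕ → ℝ) (N : ℕ) (hN : 2 ≤ N) :
    ∑ i ∈ Finset.Icc 2 N, (f (i - 1) + f i) / 2 =
      (∑ i ∈ Finset.Icc 1 N, f i) - (f 1 + f N) / 2 := by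
  induction N, hN using Nat.le_induction with
  | base =>
    rw [show Finset.Icc 2 2 = {2} from Finset.Icc_self 2,
      Finset.sum_Icc_succ_top (by norm_num : 1 ≤ 2),
      show Finset.Icc 1 1 = {1} from Finset.Icc_self 1]
    simp
    ring
  | succ n hn ih =>
    rw [Finset.sum_Icc_succ_top (by omega : 2 ≤ n + 1),
      Finset.sum_Icc_succ_top (by omega : 1 ≤ n + 1), ih]
    simp only [Nat.add_sub_cancel]
    ring

/-- Downward bias of bi-power variation under time-varying volatility: for independent
Gaussian returns `r_i ~ N(0, v_i)`, `i = 1, …, N`,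
`E[(π/2) ∑_{i=2}^N |r_{i−1}| |r_i|] ≤ ∑_{i=1}^N v_i − (v_1 + v_N)/2`,
with equality if and only if `v_{i−1} = v_i` for all `i = 2, …, N`. -/
theorem bipower_variation_downward_bias {Ω : Type*} [MeasurableSpace Ω] (P : Measure Ω)
    [IsProbabilityMeasure P] (N : ℕ) (hN : 2 ≤ N) (v : ℕ → ℝ) (hv : ∀ i, 0 ≤ v i)
    (r : ℕ → Ω → ℝ) (hrmeas : ∀ i, Measurable (r i))
    (hindep : iIndepFun
      (fun i : Fin N => r (i.1 + 1)) P)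
    (hlaw : ∀ i, 1 ≤ i → i ≤ N → Measure.map (r i) P = gaussianReal 0 (v i).toNNReal) :
    (∫ ω, (Real.pi / 2) * ∑ i ∈ Finset.Icc 2 N, |r (i - 1) ω| * |r i ω| ∂P ≤
        (∑ i ∈ Finset.Icc 1 N, v i) - (v 1 + v N) / 2) ∧
      ((∫ ω, (Real.pi / 2) * ∑ i ∈ Finset.Icc 2 N, |r (i - 1) ω| * |r i ω| ∂P =
          (∑ i ∈ Finset.Icc 1 N, v i) - (v 1 + v N) / 2) ↔
        ∀ i, 2 ≤ i → i ≤ N → v (i - 1) = v i) := by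
  have habs_meas : Measurable (fun x : ℝ => |x|) := continuous_abs.measurable
  -- integrability of |r j|
  have hInt : ∀ j, 1 ≤ j → j ≤ N → Integrable (fun ω => |r j ω|) P := by
    intro j h1 h2
    have h := bv_gauss_abs_int (v j).toNNReal
    rw [← hlaw j h1 h2] at h
    exact (integrable_map_measure habs_meas.aestronglyMeasurable
      (hrmeas j).aemeasurable).mp h
  -- value of E|r j|
  have hEabs : ∀ j, 1 ≤ j → j ≤ N → ∫ ω, |r j ω| ∂P = Real.sqrt (2 * v j / π) := by
    intro j h1 h2
    have h : ∫ ω, |r j ω| ∂P = ∫ x, |x| ∂(Measure.map (r j) P) :=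
      (integral_map (hrmeas j).aemeasurable habs_meas.aestronglyMeasurable).symm
    rw [h, hlaw j h1 h2, bv_gauss_abs, Real.coe_toNNReal _ (hv j)]
  -- pairwise independence of |r (i-1)| and |r i|
  have hindep' : ∀ i ∈ Finset.Icc 2 N,
      IndepFun (fun ω => |r (i - 1) ω|) (fun ω => |r i ω|) P := by
    intro i hi
    rw [Finset.mem_Icc] at hi
    have h1 : i - 2 < N := by omega
    have h2 : i - 1 < N := by omega
    have hne : (⟨i - 2, h1⟩ : Fin N) ≠ ⟨i - 1, h2⟩ := by
      simp only [ne_eq, Fin.mk.injEq]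
      omega
    have h := hindep.indepFun hne
    have e1 : i - 2 + 1 = i - 1 := by omega
    have e2 : i - 1 + 1 = i := by omega
    rw [e1, e2] at h
    exact h.comp habs_meas habs_meas
  -- integrability of products
  have hprodInt : ∀ i ∈ Finset.Icc 2 N,
      Integrable (fun ω => |r (i - 1) ω| * |r i ω|) P := by
    intro i hi
    have hi' := Finset.mem_Icc.mp hi
    exact (hindep' i hi).integrable_mul
      (hInt (i - 1) (by omega) (by omega)) (hInt i (by omega) hi'.2)
  -- expectation of products
  have hEprod : ∀ i ∈ Finset.Icc 2 N,
      ∫ ω, |r (i - 1) ω| * |r i ω| ∂P =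
        Real.sqrt (2 * v (i - 1) / π) * Real.sqrt (2 * v i / π) := by
    intro i hi
    have hi' := Finset.mem_Icc.mp hi
    have h := (hindep' i hi).integral_mul_eq_mul_integral
      ((hInt (i - 1) (by omega) (by omega)).aestronglyMeasurable)
      ((hInt i (by omega) hi'.2).aestronglyMeasurable)
    rw [← hEabs (i - 1) (by omega) (by omega), ← hEabs i (by omega) hi'.2]
    exact h
  -- the key scalar identity
  have key : ∀ a b : ℝ, 0 ≤ a → 0 ≤ b →
      π / 2 * (Real.sqrt (2 * a / π) * Real.sqrt (2 * b / π)) = Real.sqrt (a * b) := by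
    intro a b ha hb
    rw [← Real.sqrt_mul (by positivity : (0:ℝ) ≤ 2 * a / π)]
    have h : 2 * a / π * (2 * b / π) = a * b * (2 / π) ^ 2 := by
      field_simp
    rw [h, Real.sqrt_mul (mul_nonneg ha hb),
      Real.sqrt_sq (by positivity : (0:ℝ) ≤ 2 / π)]
    field_simp
  -- compute the LHS integral
  have hLHS : ∫ ω, (Real.pi / 2) * ∑ i ∈ Finset.Icc 2 N, |r (i - 1) ω| * |r i ω| ∂P =
      ∑ i ∈ Finset.Icc 2 N, Real.sqrt (v (i - 1) * v i) := by
    rw [integral_const_mul, integral_finset_sum _ hprodInt, Finset.mul_sum]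
    refine Finset.sum_congr rfl (fun i hi => ?_)
    rw [hEprod i hi]
    exact key _ _ (hv _) (hv _)
  have hle : ∀ i ∈ Finset.Icc 2 N,
      Real.sqrt (v (i - 1) * v i) ≤ (v (i - 1) + v i) / 2 :=
    fun i _ => bv_amgm (hv _) (hv _)
  have hT : ∑ i ∈ Finset.Icc 2 N, (v (i - 1) + v i) / 2 =
      (∑ i ∈ Finset.Icc 1 N, v i) - (v 1 + v N) / 2 := bv_sum_shift v N hN
  constructor
  · rw [hLHS, ← hT]
    exact Finset.sum_le_sum hle
  · rw [hLHS, ← hT, Finset.sum_eq_sum_iff_of_le hle]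
    constructor
    · intro h i h2 hN'
      exact (bv_amgm_eq (hv _) (hv _)).mp (h i (Finset.mem_Icc.mpr ⟨h2, hN'⟩))
    · intro h i hi
      have hi' := Finset.mem_Icc.mp hi
      exact (bv_amgm_eq (hv _) (hv _)).mpr (h i hi'.1 hi'.2)
end

section
/- Let N ≥ K ≥ 2 with K even. Let z, o : {0, 1, …, N} → ℝ, let S = {j : o_j ≠ 0} with |S| = m, let M = max_j |o_j|, and let R = max_{0 ≤ i ≤ N−K+1} |r*_{i,K}[z]|, where r*_{i,K}[x] = (1/K)(Σ_{j=K/2}^{K−1} x_{i+j} − Σ_{j=0}^{K/2−1} x_{i+j}). Then | Σ_{i=0}^{N−K+1} (r*_{i,K}[z+o])² − Σ_{i=0}^{N−K+1} (r*_{i,K}[z])² | ≤ m²·M·(2R + m·M/K). -/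
/-- The pre-averaged return of a sequence `x` over the window of length `K`
starting at index `i`:
`r*_{i,K}[x] = (1/K)(∑_{j=K/2}^{K−1} x_{i+j} − ∑_{j=0}^{K/2−1} x_{i+j})`. -/
noncomputable def preavg (K : ℕ) (x : ℕ → ℝ) (i : ℕ) : ℝ :=
  (1 / (K : ℝ)) *
    ((∑ j ∈ Finset.Ico (K / 2) K, x (i + j)) - ∑ j ∈ Finset.range (K / 2), x (i + j))

/-- Outlier robustness of the pre-averaged realized variance: if the outlier sequence
`o` is supported on `m` indices of `{0, …, N}` with maximal absolute size `M`, and `R`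
is the maximal absolute pre-averaged return of `z`, then
`|∑_i (r*_{i,K}[z+o])² − ∑_i (r*_{i,K}[z])²| ≤ m² M (2R + m M / K)`. -/
theorem preavg_rv_outlier_robust (N K : ℕ) (hKN : K ≤ N) (hK : 2 ≤ K) (hKe : Even K)
    (z o : ℕ → ℝ) (S : Finset ℕ) (m : ℕ) (M R : ℝ)
    (hS : S = (Finset.range (N + 1)).filter (fun j => o j ≠ 0))
    (hm : S.card = m)
    (hM : M = (Finset.range (N + 1)).sup'
      ⟨0, Finset.mem_range.mpr (Nat.succ_pos N)⟩ (fun j => |o j|))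
    (hR : R = (Finset.range (N - K + 2)).sup'
      ⟨0, Finset.mem_range.mpr (Nat.succ_pos (N - K + 1))⟩ (fun i => |preavg K z i|)) :
    |(∑ i ∈ Finset.range (N - K + 2), (preavg K (fun n => z n + o n) i) ^ 2) -
        ∑ i ∈ Finset.range (N - K + 2), (preavg K z i) ^ 2| ≤
      (m : ℝ) ^ 2 * M * (2 * R + (m : ℝ) * M / K) := by
  classical
  have hK0 : (0:ℝ) < K := by exact_mod_cast lt_of_lt_of_le (by norm_num) hK
  set T := Finset.range (N - K + 2) with hT
  -- M ≥ 0
  have hMb : ∀ n, n ≤ N → |o n| ≤ M := by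
    intro n hn
    rw [hM]
    exact Finset.le_sup' (fun j => |o j|) (Finset.mem_range.mpr (Nat.lt_succ_of_le hn))
  have hM0 : 0 ≤ M := le_trans (abs_nonneg _) (hMb 0 (Nat.zero_le N))
  have hRb : ∀ i ∈ T, |preavg K z i| ≤ R := by
    intro i hi
    rw [hR]
    exact Finset.le_sup' (fun i => |preavg K z i|) hi
  have hR0 : 0 ≤ R := le_trans (abs_nonneg _)
    (hRb 0 (Finset.mem_range.mpr (Nat.succ_pos _)))
  -- key counting lemma
  have key : ∀ (A : Finset ℕ) (f : ℕ → ℕ), (Set.InjOn f A) →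
      (∀ t ∈ A, f t ≤ N) → ∑ t ∈ A, |o (f t)| ≤ (m : ℝ) * M := by
    intro A f hinj hle
    have h1 : ∑ t ∈ A, |o (f t)| = ∑ t ∈ A.filter (fun t => o (f t) ≠ 0), |o (f t)| :=
      (Finset.sum_filter_of_ne (fun t ht h => by
        intro h0; exact h (by rw [h0, abs_zero]))).symm
    rw [h1]
    set B := A.filter (fun t => o (f t) ≠ 0) with hB
    have hcard : B.card ≤ m := by
      rw [← hm]
      have : B.image f ⊆ S := by
        intro n hn
        obtain ⟨t, ht, rfl⟩ := Finset.mem_image.mp hn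
        obtain ⟨htA, hto⟩ := Finset.mem_filter.mp ht
        rw [hS]
        exact Finset.mem_filter.mpr ⟨Finset.mem_range.mpr (Nat.lt_succ_of_le (hle t htA)), hto⟩
      calc B.card = (B.image f).card := (Finset.card_image_of_injOn
              (hinj.mono (fun t ht => Finset.mem_filter.mp ht |>.1))).symm
        _ ≤ S.card := Finset.card_le_card this
    calc ∑ t ∈ B, |o (f t)| ≤ ∑ t ∈ B, M :=
          Finset.sum_le_sum (fun t ht =>
            hMb _ (hle t (Finset.mem_filter.mp ht).1))
      _ = (B.card : ℝ) * M := by rw [Finset.sum_const, nsmul_eq_mul]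
      _ ≤ (m : ℝ) * M := by
          exact mul_le_mul_of_nonneg_right (by exact_mod_cast hcard) hM0
  -- pointwise bound on |preavg o i|
  have hsplit : ∀ (x : ℕ → ℝ) (i : ℕ),
      ∑ j ∈ Finset.range (K/2), x (i+j) + ∑ j ∈ Finset.Ico (K/2) K, x (i+j)
        = ∑ j ∈ Finset.range K, x (i+j) := by
    intro x i
    simp only [Finset.range_eq_Ico]
    exact Finset.sum_Ico_consecutive _ (Nat.zero_le _) (Nat.div_le_self K 2)
  have pb : ∀ i, |preavg K o i| ≤ (1/(K:ℝ)) * ∑ j ∈ Finset.range K, |o (i+j)| := by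
    intro i
    rw [preavg, abs_mul, abs_of_nonneg (by positivity : (0:ℝ) ≤ 1/(K:ℝ))]
    refine mul_le_mul_of_nonneg_left ?_ (by positivity)
    calc |∑ j ∈ Finset.Ico (K/2) K, o (i+j) - ∑ j ∈ Finset.range (K/2), o (i+j)|
        ≤ |∑ j ∈ Finset.Ico (K/2) K, o (i+j)| + |∑ j ∈ Finset.range (K/2), o (i+j)| :=
          abs_sub _ _
      _ ≤ ∑ j ∈ Finset.Ico (K/2) K, |o (i+j)| + ∑ j ∈ Finset.range (K/2), |o (i+j)| :=
          add_le_add (Finset.abs_sum_le_sum_abs _ _) (Finset.abs_sum_le_sum_abs _ _)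
      _ = ∑ j ∈ Finset.range K, |o (i+j)| := by rw [add_comm]; exact hsplit (fun n => |o n|) i
  have hidx : ∀ i ∈ T, ∀ j ∈ Finset.range K, i + j ≤ N := by
    intro i hi j hj
    have hi' := Finset.mem_range.mp hi
    have hj' := Finset.mem_range.mp hj
    omega
  have pb2 : ∀ i ∈ T, |preavg K o i| ≤ (m:ℝ) * M / K := by
    intro i hi
    refine le_trans (pb i) ?_
    have hk := key (Finset.range K) (fun j => i + j)
      (fun s _ t _ h => Nat.add_left_cancel h) (hidx i hi)
    calc (1/(K:ℝ)) * ∑ j ∈ Finset.range K, |o (i+j)|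
        ≤ (1/(K:ℝ)) * ((m:ℝ) * M) := mul_le_mul_of_nonneg_left hk (by positivity)
      _ = (m:ℝ) * M / K := by ring
  -- sum bound
  have sb : ∑ i ∈ T, |preavg K o i| ≤ (m:ℝ) * M := by
    calc ∑ i ∈ T, |preavg K o i|
        ≤ ∑ i ∈ T, (1/(K:ℝ)) * ∑ j ∈ Finset.range K, |o (i+j)| :=
          Finset.sum_le_sum (fun i _ => pb i)
      _ = (1/(K:ℝ)) * ∑ j ∈ Finset.range K, ∑ i ∈ T, |o (i+j)| := by
          rw [← Finset.mul_sum, Finset.sum_comm]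
      _ ≤ (1/(K:ℝ)) * ∑ j ∈ Finset.range K, (m:ℝ) * M := by
          refine mul_le_mul_of_nonneg_left (Finset.sum_le_sum (fun j hj => ?_)) (by positivity)
          exact key T (fun i => i + j) (fun s _ t _ h => Nat.add_right_cancel h)
            (fun i hi => hidx i hi j hj)
      _ = (1/(K:ℝ)) * ((K:ℝ) * ((m:ℝ) * M)) := by
          rw [Finset.sum_const, Finset.card_range, nsmul_eq_mul]
      _ = (m:ℝ) * M := by field_simp
  -- rewrite the difference
  have hadd : ∀ i, preavg K (fun n => z n + o n) i = preavg K z i + preavg K o i := by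
    intro i
    simp only [preavg, Finset.sum_add_distrib]
    ring
  have hrw : (∑ i ∈ T, (preavg K (fun n => z n + o n) i) ^ 2) - ∑ i ∈ T, (preavg K z i) ^ 2
      = ∑ i ∈ T, preavg K o i * (2 * preavg K z i + preavg K o i) := by
    rw [← Finset.sum_sub_distrib]
    refine Finset.sum_congr rfl (fun i _ => ?_)
    rw [hadd i]; ring
  rw [hrw]
  have C0 : (0:ℝ) ≤ 2 * R + (m:ℝ) * M / K := by positivity
  calc |∑ i ∈ T, preavg K o i * (2 * preavg K z i + preavg K o i)|
      ≤ ∑ i ∈ T, |preavg K o i * (2 * preavg K z i + preavg K o i)| :=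
        Finset.abs_sum_le_sum_abs _ _
    _ ≤ ∑ i ∈ T, |preavg K o i| * (2 * R + (m:ℝ) * M / K) := by
        refine Finset.sum_le_sum (fun i hi => ?_)
        rw [abs_mul]
        refine mul_le_mul_of_nonneg_left ?_ (abs_nonneg _)
        calc |2 * preavg K z i + preavg K o i|
            ≤ |2 * preavg K z i| + |preavg K o i| := abs_add_le _ _
          _ ≤ 2 * R + (m:ℝ) * M / K := by
              rw [abs_mul, abs_two]
              exact add_le_add (mul_le_mul_of_nonneg_left (hRb i hi) (by norm_num)) (pb2 i hi)
    _ = (∑ i ∈ T, |preavg K o i|) * (2 * R + (m:ℝ) * M / K) := by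
        rw [← Finset.sum_mul]
    _ ≤ (m:ℝ) * M * (2 * R + (m:ℝ) * M / K) := mul_le_mul_of_nonneg_right sb C0
    _ ≤ (m:ℝ) ^ 2 * M * (2 * R + (m:ℝ) * M / K) := by
        refine mul_le_mul_of_nonneg_right (mul_le_mul_of_nonneg_right ?_ hM0) C0
        have : m ≤ m ^ 2 := Nat.le_self_pow two_ne_zero m
        exact_mod_cast this
end

section
/- Let N ≥ 2. Let z, o : {0, 1, …, N} → ℝ, let S = {j : o_j ≠ 0} with |S| = m, let M = max_j |o_j|, and let D = max_{1 ≤ i ≤ N} |z_i − z_{i−1}|. For a sequence x write r_i[x] = x_i − x_{i−1}. Then | Σ_{i=2}^{N} r_i[z+o]·r_{i−1}[z+o] − Σ_{i=2}^{N} r_i[z]·r_{i−1}[z] | ≤ 16·m·M·(D + M). -/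
/-- Outlier robustness of the autocovariance sum: for prices on `{0, …, N}`, if the
outlier sequence `o` is supported on `m` indices with maximal absolute size `M`, and `D`
is the maximal absolute tick return of `z`, then the first-order autocovariance sum of
the returns of `z + o` differs from that of `z` by at most `16 m M (D + M)`. -/
theorem autocovariance_outlier_robust (N : ℕ) (hN : 2 ≤ N)
    (z o : ℕ → ℝ) (S : Finset ℕ) (m : ℕ) (M D : ℝ)
    (hS : S = (Finset.range (N + 1)).filter (fun j => o j ≠ 0))
    (hm : S.card = m)
    (hM : M = (Finset.range (N + 1)).sup'
      ⟨0, Finset.mem_range.mpr (Nat.succ_pos N)⟩ (fun j => |o j|))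
    (hD : D = (Finset.Icc 1 N).sup'
      ⟨1, Finset.mem_Icc.mpr ⟨le_refl 1, hN.trans' (by norm_num)⟩⟩
      (fun i => |z i - z (i - 1)|)) :
    |(∑ i ∈ Finset.Icc 2 N,
          ((z i + o i) - (z (i - 1) + o (i - 1))) *
            ((z (i - 1) + o (i - 1)) - (z (i - 1 - 1) + o (i - 1 - 1)))) -
        ∑ i ∈ Finset.Icc 2 N,
          (z i - z (i - 1)) * (z (i - 1) - z (i - 1 - 1))| ≤
      16 * (m : ℝ) * M * (D + M) := by
  have hM0 : 0 ≤ M := by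
    rw [hM]
    exact le_trans (abs_nonneg (o 0))
      (Finset.le_sup' (fun j => |o j|) (Finset.mem_range.mpr (Nat.succ_pos N)))
  have hD0 : 0 ≤ D := by
    rw [hD]
    exact le_trans (abs_nonneg _) (Finset.le_sup' (fun i => |z i - z (i - 1)|)
      (Finset.mem_Icc.mpr ⟨le_refl 1, hN.trans' (by norm_num)⟩))
  have hoM : ∀ j ≤ N, |o j| ≤ M := by
    intro j hj
    rw [hM]
    exact Finset.le_sup' (fun j => |o j|) (Finset.mem_range.mpr (Nat.lt_succ_of_le hj))
  have hzD : ∀ i, 1 ≤ i → i ≤ N → |z i - z (i - 1)| ≤ D := by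
    intro i h1 h2
    rw [hD]
    exact Finset.le_sup' (fun i => |z i - z (i - 1)|) (Finset.mem_Icc.mpr ⟨h1, h2⟩)
  set d : ℕ → ℝ := fun i =>
    ((z i + o i) - (z (i - 1) + o (i - 1))) *
      ((z (i - 1) + o (i - 1)) - (z (i - 1 - 1) + o (i - 1 - 1))) -
    (z i - z (i - 1)) * (z (i - 1) - z (i - 1 - 1)) with hd
  rw [← Finset.sum_sub_distrib]
  calc |∑ i ∈ Finset.Icc 2 N, d i| ≤ ∑ i ∈ Finset.Icc 2 N, |d i| :=
        Finset.abs_sum_le_sum_abs _ _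
    _ = ∑ i ∈ (Finset.Icc 2 N).filter
          (fun i => o i ≠ 0 ∨ o (i - 1) ≠ 0 ∨ o (i - 1 - 1) ≠ 0), |d i| := by
        refine (Finset.sum_subset (Finset.filter_subset _ _) ?_).symm
        intro i hi hni
        have h := Finset.mem_filter.not.mp (fun h => hni h)
        push_neg at h
        obtain ⟨h1, h2, h3⟩ := h hi
        simp [hd, h1, h2, h3]
    _ ≤ ((Finset.Icc 2 N).filter
          (fun i => o i ≠ 0 ∨ o (i - 1) ≠ 0 ∨ o (i - 1 - 1) ≠ 0)).card •
          (4 * M * (D + M)) := by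
        refine Finset.sum_le_card_nsmul _ _ _ ?_
        intro i hi
        have hi2 := Finset.mem_Icc.mp (Finset.mem_filter.mp hi).1
        have h2i : 2 ≤ i := hi2.1
        have hiN : i ≤ N := hi2.2
        have h1 : |z i - z (i - 1)| ≤ D := hzD i (le_trans (by norm_num) h2i) hiN
        have h2 : |z (i - 1) - z (i - 1 - 1)| ≤ D :=
          hzD (i - 1) (by omega) (le_trans (Nat.sub_le i 1) hiN)
        have ho1 : |o i| ≤ M := hoM i hiN
        have ho2 : |o (i - 1)| ≤ M := hoM _ (le_trans (Nat.sub_le i 1) hiN)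
        have ho3 : |o (i - 1 - 1)| ≤ M := hoM _ (by omega)
        have key : d i = (z i - z (i - 1)) * (o (i - 1) - o (i - 1 - 1))
            + (o i - o (i - 1)) * (z (i - 1) - z (i - 1 - 1))
            + (o i - o (i - 1)) * (o (i - 1) - o (i - 1 - 1)) := by
          simp only [hd]; ring
        have hu : |o i - o (i - 1)| ≤ 2 * M :=
          le_trans (abs_sub _ _) (by linarith)
        have hv : |o (i - 1) - o (i - 1 - 1)| ≤ 2 * M :=
          le_trans (abs_sub _ _) (by linarith)
        rw [key]
        refine le_trans (abs_add_three _ _ _) ?_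
        rw [abs_mul, abs_mul, abs_mul]
        have t1 : |z i - z (i - 1)| * |o (i - 1) - o (i - 1 - 1)| ≤ D * (2 * M) :=
          mul_le_mul h1 hv (abs_nonneg _) hD0
        have t2 : |o i - o (i - 1)| * |z (i - 1) - z (i - 1 - 1)| ≤ (2 * M) * D :=
          mul_le_mul hu h2 (abs_nonneg _) (by positivity)
        have t3 : |o i - o (i - 1)| * |o (i - 1) - o (i - 1 - 1)| ≤ (2 * M) * (2 * M) :=
          mul_le_mul hu hv (abs_nonneg _) (by positivity)
        nlinarith [t1, t2, t3]
    _ ≤ 16 * (m : ℝ) * M * (D + M) := by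
        have hsub : (Finset.Icc 2 N).filter
            (fun i => o i ≠ 0 ∨ o (i - 1) ≠ 0 ∨ o (i - 1 - 1) ≠ 0) ⊆
            S ∪ S.image (· + 1) ∪ S.image (· + 2) := by
          intro i hi
          obtain ⟨hiI, hcase⟩ := Finset.mem_filter.mp hi
          have hi2 := Finset.mem_Icc.mp hiI
          have h2i : 2 ≤ i := hi2.1
          have hiN : i ≤ N := hi2.2
          rcases hcase with h | h | h
          · exact Finset.mem_union_left _ (Finset.mem_union_left _ (by
              rw [hS]
              exact Finset.mem_filter.mpr ⟨Finset.mem_range.mpr (Nat.lt_succ_of_le hiN), h⟩))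
          · refine Finset.mem_union_left _ (Finset.mem_union_right _ ?_)
            refine Finset.mem_image.mpr ⟨i - 1, ?_, by omega⟩
            rw [hS]
            exact Finset.mem_filter.mpr ⟨Finset.mem_range.mpr (by omega), h⟩
          · refine Finset.mem_union_right _ ?_
            refine Finset.mem_image.mpr ⟨i - 1 - 1, ?_, by omega⟩
            rw [hS]
            exact Finset.mem_filter.mpr ⟨Finset.mem_range.mpr (by omega), h⟩
        have hcard : ((Finset.Icc 2 N).filter
            (fun i => o i ≠ 0 ∨ o (i - 1) ≠ 0 ∨ o (i - 1 - 1) ≠ 0)).card ≤ 3 * m := by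
          have hc1 := Finset.card_le_card hsub
          have hc2 := Finset.card_union_le (S ∪ S.image (· + 1)) (S.image (· + 2))
          have hc3 := Finset.card_union_le S (S.image (· + 1))
          have h1 := Finset.card_image_le (s := S) (f := (· + 1))
          have h2 := Finset.card_image_le (s := S) (f := (· + 2))
          omega
        rw [nsmul_eq_mul]
        have hcR : (((Finset.Icc 2 N).filter
            (fun i => o i ≠ 0 ∨ o (i - 1) ≠ 0 ∨ o (i - 1 - 1) ≠ 0)).card : ℝ) ≤ 3 * m := by
          exact_mod_cast hcard
        have hmm : 0 ≤ (m : ℝ) := Nat.cast_nonneg m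
        nlinarith [mul_nonneg hM0 (add_nonneg hD0 hM0),
          mul_nonneg hmm (mul_nonneg hM0 (add_nonneg hD0 hM0))]
end
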